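/- With the nonlocal divergence D and its adjoint D* defined via an antisymmetric function α(x,y) and interaction indicator χ as above, and with Θ(x,y) a symmetric (Θ(x,y)=Θ(y,x)) matrix-valued function, one has for every suitable scalar function u and all x: -D(Θ D* u)(x) = 2 ∫_{Ω∪Ω_I} (u(y)-u(x)) γ(x,y) dy, where γ(x,y) := α(x,y) · (Θ(x,y) α(x,y)) χ(x,y). Moreover this kernel γ is symmetric: γ(x,y) = γ(y,x). -/
import Mathlib


open MeasureTheory RealInnerProductSpace

/-- The composition `-D(Θ D* u)` equals the nonlocal Laplacian with kernel
`γ(x,y) = α(x,y)·(Θ(x,y)α(x,y)) χ(x,y)`, and this kernel is symmetric. -/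
theorem nonlocal_composition_kernel
    {d : ℕ} (S : Set (EuclideanSpace ℝ (Fin d))) (hS : MeasurableSet S)
    (hfin : volume S < ⊤) (δ : ℝ) (hδ : 0 < δ)
    (α : EuclideanSpace ℝ (Fin d) → EuclideanSpace ℝ (Fin d) → EuclideanSpace ℝ (Fin d))
    (hαanti : ∀ x y, α y x = -α x y)
    (Θ : EuclideanSpace ℝ (Fin d) → EuclideanSpace ℝ (Fin d) →
      (EuclideanSpace ℝ (Fin d) →L[ℝ] EuclideanSpace ℝ (Fin d)))
    (hΘsymm : ∀ x y, Θ x y = Θ y x)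
    (u : EuclideanSpace ℝ (Fin d) → ℝ)
    (γ : EuclideanSpace ℝ (Fin d) → EuclideanSpace ℝ (Fin d) → ℝ)
    (hγdef : ∀ x y, γ x y = ⟪α x y, Θ x y (α x y)⟫ * (if dist x y < δ then (1 : ℝ) else 0))
    (ν : EuclideanSpace ℝ (Fin d) → EuclideanSpace ℝ (Fin d) → EuclideanSpace ℝ (Fin d))
    (hνdef : ∀ x y, ν x y =
      Θ x y (((-(u y - u x)) * (if dist x y < δ then (1 : ℝ) else 0)) • α x y))
    (hint : ∀ x, IntegrableOn (fun y => (u y - u x) * γ x y) S) :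
    (∀ x y, γ x y = γ y x) ∧
    ∀ x, -(∫ y in S, ⟪ν y x + ν x y, α x y⟫ * (if dist x y < δ then (1 : ℝ) else 0))
      = 2 * ∫ y in S, (u y - u x) * γ x y := by
  constructor
  · intro x y
    rw [hγdef, hγdef, hαanti x y, hΘsymm x y, dist_comm y x]
    simp [inner_neg_neg]
  · intro x
    have key : ∀ y, ⟪ν y x + ν x y, α x y⟫ * (if dist x y < δ then (1 : ℝ) else 0)
        = (-2) * ((u y - u x) * γ x y) := by
      intro y
      have hsame : ν y x = ν x y := by
        rw [hνdef, hνdef, hαanti x y, hΘsymm x y, dist_comm y x]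
        by_cases h : dist x y < δ <;> simp [h] <;> module
      rw [hsame, hνdef, hγdef, ContinuousLinearMap.map_smul, inner_add_left,
        real_inner_smul_left, real_inner_comm ((Θ x y) (α x y))]
      by_cases h : dist x y < δ <;>
        simp only [h, if_true, if_false, mul_one, mul_zero, zero_mul] <;> ring
    calc -(∫ y in S, ⟪ν y x + ν x y, α x y⟫ * (if dist x y < δ then (1 : ℝ) else 0))
        = -(∫ y in S, (-2) * ((u y - u x) * γ x y)) := by
          congr 1; exact setIntegral_congr_fun hS fun y _ => key y
      _ = 2 * ∫ y in S, (u y - u x) * γ x y := by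
          rw [integral_const_mul]; ring
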